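/- arXiv:2210.03789 — 2 statements merged into one kernel-verified Lean document; each statement's English description precedes it below -/
import Mathlib

section
/- For every ε > 0 there exists Q such that for every odd prime power q ≥ Q there exists a subset Y ⊆ F_q with |Y| = ⌊(1/2 − ε)·log₂ q⌋ that is shattered by the set S_q of nonzero squares in the modified sense; in particular the VC-dimension of S_q with respect to additive translates is at least (1/2 − ε)·log₂ q − 1. -/
set_option maxHeartbeats 1000000

open Finset



/-- `S` shatters the finite set `Y` in the modified sense: for every `A ⊆ Y` there is a
translate `x ∉ Y` with `y ∈ A ↔ y - x ∈ S` for all `y ∈ Y`. -/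
def ModShatters {F : Type} [Field F] (S : Set F) (Y : Finset F) : Prop :=
  ∀ A ⊆ Y, ∃ x : F, x ∉ Y ∧ ∀ y ∈ Y, (y ∈ A ↔ y - x ∈ S)

/-- The set of nonzero squares in `F`. -/
def Squares (F : Type) [Field F] : Set F := {z : F | ∃ w : F, w ≠ 0 ∧ z = w ^ 2}

/-- The VC-dimension of the family of additive translates of `S ⊆ F` (with the modified
notion of shattering): the largest size of a shattered finite subset. -/
noncomputable def vcDim (F : Type) [Field F] (S : Set F) : ℕ :=
  sSup {n : ℕ | ∃ Y : Finset F, Y.card = n ∧ ModShatters S Y}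


open Finset

variable {F : Type} [Field F] [Fintype F] [DecidableEq F]

lemma sum_qc_shift (hF : ringChar F ≠ 2) {c : F} (hc : c ≠ 0) :
    ∑ y : F, quadraticChar F y * quadraticChar F (y + c) = -1 := by
  classical
  have key : ∀ y : F, y ≠ 0 → quadraticChar F y * quadraticChar F (y + c)
      = quadraticChar F (1 + c * y⁻¹) := by
    intro y hy
    have : y + c = y * (1 + c * y⁻¹) := by field_simp
    rw [this, map_mul, ← mul_assoc, ← pow_two, quadraticChar_sq_one hy, one_mul]
  rw [← Finset.sum_erase_add _ _ (mem_univ (0:F))]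
  simp only [quadraticChar_zero, zero_mul, add_zero]
  have h2 : ∑ y ∈ univ.erase (0:F), quadraticChar F y * quadraticChar F (y + c)
      = ∑ z ∈ univ.erase (1:F), quadraticChar F z := by
    refine Finset.sum_nbij' (fun y => 1 + c * y⁻¹) (fun z => c * (z - 1)⁻¹) ?_ ?_ ?_ ?_ ?_
    · intro y hy
      simp only [mem_erase, mem_univ, and_true] at hy ⊢
      intro h
      apply hc
      have h0 : c * y⁻¹ = 0 := by linear_combination h
      rcases mul_eq_zero.mp h0 with h1 | h1
      · exact h1
      · exact absurd (inv_eq_zero.mp h1) hy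
    · intro z hz
      simp only [mem_erase, mem_univ, and_true] at hz ⊢
      intro h
      rcases mul_eq_zero.mp h with h1 | h1
      · exact hc h1
      · rw [inv_eq_zero, sub_eq_zero] at h1
        exact hz h1
    · intro y hy
      simp only [mem_erase, mem_univ, and_true] at hy
      field_simp
      rw [add_sub_cancel_left, div_self hc]
    · intro z hz
      simp only [mem_erase, mem_univ, and_true] at hz
      have hz1 : z - 1 ≠ 0 := sub_ne_zero.mpr hz
      field_simp
      ring
    · intro y hy
      simp only [mem_erase, mem_univ, and_true] at hy
      exact (key y hy).symm ▸ rfl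
  rw [h2, Finset.sum_erase_eq_sub (mem_univ (1:F)), quadraticChar_sum_zero hF, map_one]
  ring

lemma sum_qc_pair (hF : ringChar F ≠ 2) {x x' : F} (h : x ≠ x') :
    ∑ y : F, quadraticChar F (y - x) * quadraticChar F (y - x') = -1 := by
  have hc : x - x' ≠ 0 := sub_ne_zero.mpr h
  calc ∑ y : F, quadraticChar F (y - x) * quadraticChar F (y - x')
      = ∑ y : F, quadraticChar F y * quadraticChar F (y + (x - x')) := by
        refine Fintype.sum_bijective (fun y => y - x) ((Equiv.subRight x).bijective) _ _ ?_
        intro y; ring_nf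
    _ = -1 := sum_qc_shift hF hc

lemma sum_qc_diag {x : F} : ∑ y : F, quadraticChar F (y - x) * quadraticChar F (y - x)
    = (Fintype.card F : ℤ) - 1 := by
  rw [← Finset.sum_erase_add _ _ (mem_univ x)]
  simp only [sub_self, quadraticChar_zero, mul_zero, add_zero]
  have : ∀ y ∈ univ.erase x, quadraticChar F (y - x) * quadraticChar F (y - x) = 1 := by
    intro y hy
    simp only [mem_erase, mem_univ, and_true] at hy
    rw [← pow_two]
    exact quadraticChar_sq_one (sub_ne_zero.mpr hy)
  rw [Finset.sum_congr rfl this, Finset.sum_const, card_erase_of_mem (mem_univ x),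
    Finset.card_univ]
  have h1 : 1 ≤ Fintype.card F := Fintype.card_pos
  rw [nsmul_eq_mul, Nat.cast_sub h1]
  push_cast
  ring

/-- second moment bound -/
lemma sum_dev_sq_le (hF : ringChar F ≠ 2) (C : Finset F) :
    ∑ y : F, (∑ x ∈ C, quadraticChar F (y - x))^2 ≤ (C.card : ℤ) * Fintype.card F := by
  have expand : ∑ y : F, (∑ x ∈ C, quadraticChar F (y - x))^2
      = ∑ x ∈ C, ∑ x' ∈ C, ∑ y : F, quadraticChar F (y - x) * quadraticChar F (y - x') := by
    calc ∑ y : F, (∑ x ∈ C, quadraticChar F (y - x))^2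
        = ∑ y : F, ∑ x ∈ C, ∑ x' ∈ C,
            quadraticChar F (y - x) * quadraticChar F (y - x') := by
          refine Finset.sum_congr rfl fun y _ => ?_
          rw [pow_two, Finset.sum_mul_sum]
      _ = ∑ x ∈ C, ∑ y : F, ∑ x' ∈ C,
            quadraticChar F (y - x) * quadraticChar F (y - x') := Finset.sum_comm
      _ = _ := Finset.sum_congr rfl fun x _ => Finset.sum_comm
  have inner : ∀ x ∈ C, (∑ x' ∈ C, ∑ y : F, quadraticChar F (y - x) * quadraticChar F (y - x'))
      = (Fintype.card F : ℤ) - C.card := by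
    intro x hx
    rw [← Finset.add_sum_erase _ _ hx, sum_qc_diag]
    have : ∀ x' ∈ C.erase x, (∑ y : F, quadraticChar F (y - x) * quadraticChar F (y - x'))
        = -1 := by
      intro x' hx'
      exact sum_qc_pair hF (Ne.symm (mem_erase.mp hx').1)
    rw [Finset.sum_congr rfl this, Finset.sum_const, card_erase_of_mem hx]
    have h1 : 1 ≤ C.card := Finset.card_pos.mpr ⟨x, hx⟩
    rw [nsmul_eq_mul, Nat.cast_sub h1]
    push_cast
    ring
  rw [expand, Finset.sum_congr rfl inner, Finset.sum_const, nsmul_eq_mul]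
  have hc0 : (0:ℤ) ≤ C.card := Int.natCast_nonneg _
  have hc1 : (0:ℤ) ≤ C.card := hc0
  nlinarith [Int.natCast_nonneg (Fintype.card F)]

/-- the class of `x` realizing pattern `A` on `Y` -/
def cls (Y A : Finset F) : Finset F :=
  univ.filter (fun x => ∀ y ∈ Y, quadraticChar F (y - x) = if y ∈ A then 1 else -1)

lemma sum_cls_card (Y : Finset F) :
    ∑ A ∈ Y.powerset, (cls Y A).card ≤ Fintype.card F := by
  have hdisj : ∀ A ∈ Y.powerset, ∀ B ∈ Y.powerset, A ≠ B → Disjoint (cls Y A) (cls Y B) := by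
    intro A hA B hB hAB
    rw [Finset.mem_powerset] at hA hB
    have hy : ∃ y ∈ Y, ¬ ((y ∈ A) ↔ (y ∈ B)) := by
      by_contra h
      push_neg at h
      exact hAB (Finset.ext fun y => by
        constructor
        · intro hyA; exact ((h y (hA hyA)).mp hyA)
        · intro hyB; exact ((h y (hB hyB)).mpr hyB))
    obtain ⟨y, hyY, hyAB⟩ := hy
    rw [Finset.disjoint_left]
    intro x hxA hxB
    simp only [cls, Finset.mem_filter] at hxA hxB
    have h1 := hxA.2 y hyY
    have h2 := hxB.2 y hyY
    by_cases hA' : y ∈ A <;> by_cases hB' : y ∈ B <;>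
      simp [hA', hB'] at h1 h2 hyAB <;> omega
  calc ∑ A ∈ Y.powerset, (cls Y A).card
      = (Y.powerset.biUnion (cls Y)).card := (Finset.card_biUnion hdisj).symm
    _ ≤ Fintype.card F := Finset.card_le_univ _

/-- the invariant -/
def ClsInv (Y : Finset F) : Prop :=
  ∀ A ∈ Y.powerset,
    (Fintype.card F : ℝ) / 2 ^ Y.card - (Real.sqrt (2 * Fintype.card F) + 1)
      ≤ ((cls Y A).card : ℝ)

lemma dev_split (C : Finset F) (y : F) :
    ∑ x ∈ C, quadraticChar F (y - x)
      = ((C.filter (fun x => quadraticChar F (y - x) = 1)).card : ℤ)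
        - ((C.filter (fun x => quadraticChar F (y - x) = -1)).card : ℤ) := by
  classical
  rw [← Finset.sum_filter_add_sum_filter_not C (fun x => quadraticChar F (y - x) = 1)]
  have h1 : ∑ x ∈ C.filter (fun x => quadraticChar F (y - x) = 1), quadraticChar F (y - x)
      = ((C.filter (fun x => quadraticChar F (y - x) = 1)).card : ℤ) := by
    rw [Finset.sum_congr rfl (fun x hx => (Finset.mem_filter.mp hx).2), Finset.sum_const,
      nsmul_eq_mul, mul_one]
  have h2 : ∑ x ∈ C.filter (fun x => ¬ quadraticChar F (y - x) = 1), quadraticChar F (y - x)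
      = -((C.filter (fun x => quadraticChar F (y - x) = -1)).card : ℤ) := by
    have hsplit := Finset.sum_filter_add_sum_filter_not
      (C.filter (fun x => ¬ quadraticChar F (y - x) = 1))
      (fun x => quadraticChar F (y - x) = -1) (fun x => quadraticChar F (y - x))
    rw [← hsplit]
    have e1 : (C.filter (fun x => ¬ quadraticChar F (y - x) = 1)).filter
        (fun x => quadraticChar F (y - x) = -1)
        = C.filter (fun x => quadraticChar F (y - x) = -1) := by
      rw [Finset.filter_filter]
      exact Finset.filter_congr (fun x _ => by constructor <;> intro h <;> [exact h.2; exact ⟨by omega, h⟩])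
    have e2 : ∑ x ∈ (C.filter (fun x => ¬ quadraticChar F (y - x) = 1)).filter
        (fun x => ¬ quadraticChar F (y - x) = -1), quadraticChar F (y - x) = 0 := by
      refine Finset.sum_eq_zero fun x hx => ?_
      simp only [Finset.mem_filter] at hx
      rcases eq_or_ne (y - x) 0 with h0 | h0
      · rw [h0, quadraticChar_zero]
      · rcases quadraticChar_dichotomy h0 with h | h
        · exact absurd h hx.1.2
        · exact absurd h hx.2
    rw [e1] at hsplit ⊢
    have : ∑ x ∈ C.filter (fun x => quadraticChar F (y - x) = -1), quadraticChar F (y - x)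
        = -((C.filter (fun x => quadraticChar F (y - x) = -1)).card : ℤ) := by
      rw [Finset.sum_congr rfl (fun x hx => (Finset.mem_filter.mp hx).2), Finset.sum_const,
        nsmul_eq_mul, mul_neg_one]
    rw [this, e2, add_zero]
  rw [h1, h2]
  ring

lemma card_split (C : Finset F) (y : F) :
    C.card ≤ (C.filter (fun x => quadraticChar F (y - x) = 1)).card
      + (C.filter (fun x => quadraticChar F (y - x) = -1)).card + 1 := by
  classical
  have hsub : C ⊆ (C.filter (fun x => quadraticChar F (y - x) = 1))
      ∪ (C.filter (fun x => quadraticChar F (y - x) = -1)) ∪ {y} := by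
    intro x hx
    rcases eq_or_ne (y - x) 0 with h0 | h0
    · have : x = y := by linear_combination -h0
      simp [this]
    · rcases quadraticChar_dichotomy h0 with h | h
      · simp only [Finset.mem_union, Finset.mem_filter]
        exact Or.inl (Or.inl ⟨hx, h⟩)
      · simp only [Finset.mem_union, Finset.mem_filter]
        exact Or.inl (Or.inr ⟨hx, h⟩)
  calc C.card ≤ _ := Finset.card_le_card hsub
    _ ≤ _ := by
        refine le_trans (Finset.card_union_le _ _) ?_
        simp only [Finset.card_singleton]
        exact Nat.add_le_add_right (Finset.card_union_le _ _) 1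

lemma exists_good (hF : ringChar F ≠ 2) (Y : Finset F)
    (hY : 2 * Y.card + 2 ≤ Fintype.card F) :
    ∃ y, y ∉ Y ∧ ∀ A ∈ Y.powerset,
      (∑ x ∈ cls Y A, quadraticChar F (y - x))^2 ≤ 2 * (Fintype.card F : ℤ) := by
  classical
  set q := Fintype.card F with hq
  set bad : Finset F → Finset F := fun A =>
    univ.filter (fun y => 2 * (q:ℤ) < (∑ x ∈ cls Y A, quadraticChar F (y - x))^2) with hbad
  have hq1 : 1 ≤ q := Fintype.card_pos
  have step1 : ∀ A, 2 * (bad A).card ≤ (cls Y A).card := by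
    intro A
    have hlow : ((bad A).card : ℤ) * (2*(q:ℤ)+1) ≤ ∑ y ∈ bad A, (∑ x ∈ cls Y A, quadraticChar F (y - x))^2 := by
      rw [← nsmul_eq_mul]
      refine Finset.card_nsmul_le_sum _ _ _ ?_
      intro y hy
      simp only [hbad, Finset.mem_filter] at hy
      omega
    have hup : ∑ y ∈ bad A, (∑ x ∈ cls Y A, quadraticChar F (y - x))^2
        ≤ ((cls Y A).card : ℤ) * q := by
      refine le_trans (Finset.sum_le_sum_of_subset_of_nonneg (Finset.subset_univ _)
        (fun y _ _ => sq_nonneg _)) ?_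
      exact sum_dev_sq_le hF _
    have hZ : 2 * ((bad A).card : ℤ) ≤ (cls Y A).card := by
      have hqpos : (0:ℤ) < q := by exact_mod_cast hq1
      have h1 : ((bad A).card : ℤ) * (2*(q:ℤ)) ≤ ((cls Y A).card : ℤ) * q := by
        nlinarith [Int.natCast_nonneg (bad A).card]
      have := le_of_mul_le_mul_right (by linarith [h1] : (2 * ((bad A).card:ℤ)) * q ≤ ((cls Y A).card : ℤ) * q) hqpos
      exact this
    exact_mod_cast hZ
  have step2 : 2 * ∑ A ∈ Y.powerset, (bad A).card ≤ q := by
    calc 2 * ∑ A ∈ Y.powerset, (bad A).card = ∑ A ∈ Y.powerset, 2 * (bad A).card :=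
        Finset.mul_sum _ _ _
      _ ≤ ∑ A ∈ Y.powerset, (cls Y A).card := Finset.sum_le_sum fun A _ => step1 A
      _ ≤ q := sum_cls_card Y
  set Bad := Y ∪ Y.powerset.biUnion bad with hBad
  have hcard : Bad.card < Fintype.card F := by
    have h1 : Bad.card ≤ Y.card + ∑ A ∈ Y.powerset, (bad A).card :=
      le_trans (Finset.card_union_le _ _) (by
        exact Nat.add_le_add_left (Finset.card_biUnion_le) _)
    omega
  have hssub : Bad ⊂ univ := Finset.ssubset_univ_iff.mpr
    (fun h => by rw [h, Finset.card_univ] at hcard; omega)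
  obtain ⟨y, _, hyBad⟩ := Finset.exists_of_ssubset hssub
  refine ⟨y, fun h => hyBad (Finset.mem_union_left _ h), ?_⟩
  intro A hA
  by_contra hcon
  push_neg at hcon
  exact hyBad (Finset.mem_union_right _ (Finset.mem_biUnion.mpr
    ⟨A, hA, by simp only [hbad, Finset.mem_filter]; exact ⟨mem_univ y, hcon⟩⟩))

lemma cls_insert (Y A' : Finset F) (y : F) (hyY : y ∉ Y) :
    cls (insert y Y) A' = (cls Y (A'.erase y)).filter
      (fun x => quadraticChar F (y - x) = if y ∈ A' then 1 else -1) := by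
  classical
  ext x
  simp only [cls, Finset.mem_filter, Finset.mem_univ, true_and, Finset.mem_insert]
  constructor
  · intro h
    refine ⟨fun z hz => ?_, h y (Or.inl rfl)⟩
    have hz' := h z (Or.inr hz)
    have hzy : z ≠ y := fun e => hyY (e ▸ hz)
    have he : (if z ∈ A'.erase y then (1:ℤ) else -1) = (if z ∈ A' then 1 else -1) :=
      if_congr (by simp [Finset.mem_erase, hzy]) rfl rfl
    rw [he]
    exact hz'
  · rintro ⟨h1, h2⟩ z hz
    rcases hz with rfl | hz
    · exact h2
    · have hzy : z ≠ y := fun e => hyY (e ▸ hz)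
      have he : (if z ∈ A'.erase y then (1:ℤ) else -1) = (if z ∈ A' then 1 else -1) :=
        if_congr (by simp [Finset.mem_erase, hzy]) rfl rfl
      have := h1 z hz
      rwa [he] at this

lemma step_lemma (hF : ringChar F ≠ 2) (Y : Finset F) (hInv : ClsInv Y)
    (hY : 2 * Y.card + 2 ≤ Fintype.card F) :
    ∃ y, y ∉ Y ∧ ClsInv (insert y Y) := by
  classical
  obtain ⟨y, hyY, hgood⟩ := exists_good hF Y hY
  refine ⟨y, hyY, ?_⟩
  intro A' hA'
  rw [Finset.mem_powerset] at hA'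
  set A := A'.erase y with hAdef
  have hA : A ∈ Y.powerset := by
    rw [Finset.mem_powerset]
    intro z hz
    have hmem := Finset.mem_erase.mp hz
    rcases Finset.mem_insert.mp (hA' hmem.2) with h | h
    · exact absurd h hmem.1
    · exact h
  rw [cls_insert Y A' y hyY, Finset.card_insert_of_notMem hyY]
  set C := cls Y A with hC
  set P := C.filter (fun x => quadraticChar F (y - x) = 1) with hP
  set M := C.filter (fun x => quadraticChar F (y - x) = -1) with hM
  have hCsize := hInv A hA
  have hdev2 := hgood A hA
  have hsplit := dev_split C y
  have hcsplit := card_split C y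
  set q := Fintype.card F with hq
  set s := Real.sqrt (2 * q) with hs
  have hdevR : |((P.card : ℝ) - M.card)| ≤ s := by
    have h1 : (((P.card : ℤ) - M.card) : ℝ)^2 ≤ ((2 * (q:ℤ) : ℤ) : ℝ) := by
      exact_mod_cast (hsplit ▸ hdev2)
    rw [hs]
    rw [← Real.sqrt_sq_eq_abs]
    refine Real.sqrt_le_sqrt ?_
    push_cast at h1 ⊢
    linarith
  have hcCR : (C.card : ℝ) ≤ (P.card : ℝ) + M.card + 1 := by exact_mod_cast hcsplit
  have habs1 : -s ≤ (P.card : ℝ) - M.card := neg_le_of_abs_le hdevR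
  have habs2 : (P.card : ℝ) - M.card ≤ s := le_of_abs_le hdevR
  have hpow : (2:ℝ) ^ (Y.card + 1) = 2 ^ Y.card * 2 := pow_succ 2 _
  have hppos : (0:ℝ) < 2 ^ Y.card := by positivity
  have hgoal : ∀ T : Finset F, (C.card : ℝ) - 1 - s ≤ 2 * T.card →
      (q : ℝ) / 2 ^ (Y.card + 1) - (s + 1) ≤ (T.card : ℝ) := by
    intro T hT
    rw [hpow]
    have h2 : (q:ℝ) / (2 ^ Y.card * 2) = ((q:ℝ) / 2 ^ Y.card) / 2 := by ring
    rw [h2]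
    linarith
  by_cases hyA : y ∈ A'
  · simp only [if_pos hyA]
    refine hgoal P ?_
    linarith
  · simp only [if_neg hyA]
    refine hgoal M ?_
    linarith

lemma build_lemma (hF : ringChar F ≠ 2) :
    ∀ k : ℕ, 2 * k + 2 ≤ Fintype.card F → ∃ Y : Finset F, Y.card = k ∧ ClsInv Y := by
  intro k
  induction k with
  | zero =>
    intro _
    refine ⟨∅, Finset.card_empty, ?_⟩
    intro A hA
    have : cls (∅ : Finset F) A = univ := by
      ext x; simp [cls]
    rw [this, Finset.card_univ, Finset.card_empty, pow_zero]
    have := Real.sqrt_nonneg (2 * (Fintype.card F : ℝ))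
    push_cast
    linarith
  | succ k ih =>
    intro hk
    obtain ⟨Y, hYcard, hYInv⟩ := ih (by omega)
    obtain ⟨y, hyY, hInv'⟩ := step_lemma hF Y hYInv (by omega)
    exact ⟨insert y Y, by rw [Finset.card_insert_of_notMem hyY, hYcard], hInv'⟩

lemma shatter_of_inv (Y : Finset F) (hInv : ClsInv Y)
    (hbig : (Y.card : ℝ) + 1 ≤ (Fintype.card F : ℝ) / 2 ^ Y.card
      - (Real.sqrt (2 * Fintype.card F) + 1)) :
    ModShatters (Squares F) Y := by
  intro A hA
  have hA' : A ∈ Y.powerset := Finset.mem_powerset.mpr hA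
  set C := cls Y A with hC
  have hcard : Y.card + 1 ≤ C.card := by
    have := le_trans hbig (hInv A hA')
    exact_mod_cast this
  have hex : ∃ x, x ∈ C ∧ x ∉ Y := by
    by_contra h
    push_neg at h
    have hsub : C ⊆ Y := fun x hx => h x hx
    have := Finset.card_le_card hsub
    omega
  obtain ⟨x, hxC, hxY⟩ := hex
  refine ⟨x, hxY, ?_⟩
  intro y hyY
  have hyx : y - x ≠ 0 := sub_ne_zero.mpr (fun e => hxY (e ▸ hyY))
  have hcls : quadraticChar F (y - x) = if y ∈ A then 1 else -1 := by
    simp only [hC, cls, Finset.mem_filter] at hxC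
    exact hxC.2 y hyY
  constructor
  · intro hyA
    rw [if_pos hyA] at hcls
    obtain ⟨w, hw⟩ := (quadraticChar_one_iff_isSquare hyx).mp hcls
    refine ⟨w, fun hw0 => hyx (by rw [hw, hw0, mul_zero]), by rw [hw, pow_two]⟩
  · intro hsq
    obtain ⟨w, hw0, hw⟩ := hsq
    have h1 : quadraticChar F (y - x) = 1 := by rw [hw]; exact quadraticChar_sq_one' hw0
    by_cases hyA : y ∈ A
    · exact hyA
    · rw [if_neg hyA, h1] at hcls
      exact absurd hcls (by norm_num)

/-- For every `ε > 0` there is `Q` such that every finite field `F_q` of odd order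
`q ≥ Q` contains a subset `Y` of size `⌊(1/2 - ε) log₂ q⌋` shattered by the nonzero
squares in the modified sense; in particular the VC-dimension of the squares with
respect to additive translates is at least `(1/2 - ε) log₂ q - 1`. -/
theorem exists_large_shattered_set (ε : ℝ) (hε : 0 < ε) :
    ∃ Q : ℕ, ∀ (F : Type) [Field F] [Fintype F],
      Odd (Fintype.card F) → Q ≤ Fintype.card F →
      (∃ Y : Finset F,
          Y.card = ⌊(1 / 2 - ε) * Real.logb 2 (Fintype.card F)⌋₊ ∧
          ModShatters (Squares F) Y) ∧
      (1 / 2 - ε) * Real.logb 2 (Fintype.card F) - 1 ≤ (vcDim F (Squares F) : ℝ) := by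

  set δ := min ε (1/4:ℝ) with hδdef
  have hδ : 0 < δ := lt_min hε (by norm_num)
  have hδ4 : δ ≤ 1/4 := min_le_right _ _
  have hδε : δ ≤ ε := min_le_left _ _
  obtain ⟨N, hN⟩ := exists_nat_ge ((6:ℝ) ^ ((1:ℝ)/δ))
  refine ⟨max N 4096, ?_⟩
  intro F _ _ hodd hQ
  letI := Classical.decEq F
  set q := Fintype.card F with hqdef
  have hq4096 : (4096:ℕ) ≤ q := le_trans (le_max_right N 4096) hQ
  have hqR : (4096:ℝ) ≤ (q:ℝ) := by exact_mod_cast hq4096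
  have hq0 : (0:ℝ) < q := by linarith
  have hqN : ((6:ℝ) ^ ((1:ℝ)/δ)) ≤ (q:ℝ) := by
    refine le_trans hN ?_
    exact_mod_cast le_trans (le_max_left N 4096) hQ
  have hF2 : ringChar F ≠ 2 := by
    intro h
    have h' := FiniteField.even_card_iff_char_two.mp h
    rw [Nat.odd_iff] at hodd
    omega
  set L := Real.logb 2 (q:ℝ) with hL
  set k := ⌊(1/2 - ε) * L⌋₊ with hk
  have hq1 : (1:ℝ) ≤ q := by linarith
  have hsq : Real.sqrt q * Real.sqrt q = q := Real.mul_self_sqrt hq0.le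
  have hsq64 : (64:ℝ) ≤ Real.sqrt q := by
    have h1 : Real.sqrt 4096 ≤ Real.sqrt q := Real.sqrt_le_sqrt hqR
    have h2 : Real.sqrt 4096 = 64 := by
      rw [show (4096:ℝ) = 64^2 by norm_num, Real.sqrt_sq (by norm_num)]
    linarith
  have hsqrt2q : Real.sqrt (2*(q:ℝ)) ≤ 2 * Real.sqrt q := by
    have h1 : Real.sqrt (2*(q:ℝ)) ≤ Real.sqrt (4*(q:ℝ)) := Real.sqrt_le_sqrt (by linarith)
    have h2 : Real.sqrt (4*(q:ℝ)) = 2 * Real.sqrt q := by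
      rw [show (4:ℝ)*(q:ℝ) = (2:ℝ)^2 * q by ring, Real.sqrt_mul (by positivity) _,
        Real.sqrt_sq (by norm_num)]
    linarith
  have hLnn : 0 ≤ L := Real.logb_nonneg (by norm_num) hq1
  have hkx : (k:ℝ) ≤ L/2 := by
    have h1 : (1/2 - ε) * L ≤ L/2 := by nlinarith
    calc (k:ℝ) ≤ (⌊L/2⌋₊ : ℝ) := by exact_mod_cast Nat.floor_mono h1
      _ ≤ L/2 := Nat.floor_le (by positivity)
  have hlogq0 : 0 ≤ Real.log q := Real.log_nonneg hq1
  have hlogq : Real.log q ≤ 2 * Real.sqrt q := by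
    have h1 : Real.log ((Real.sqrt q)^2) = 2 * Real.log (Real.sqrt q) := by
      rw [Real.log_pow]; push_cast; ring
    have h2 : Real.log (Real.sqrt q) ≤ Real.sqrt q - 1 :=
      Real.log_le_sub_one_of_pos (by positivity)
    have h3 : (Real.sqrt q)^2 = q := Real.sq_sqrt hq0.le
    rw [h3] at h1
    linarith
  have hlog2 : (1/2:ℝ) ≤ Real.log 2 := by
    have := Real.log_two_gt_d9
    linarith
  have hL2 : L ≤ 4 * Real.sqrt q := by
    have h0 : L = Real.log q / Real.log 2 := rfl
    have h1 : L * Real.log 2 = Real.log q := by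
      rw [h0]; field_simp
    nlinarith [Real.sqrt_nonneg (q:ℝ)]
  have hkq : (k:ℝ) ≤ 2 * Real.sqrt q := by linarith
  have hbuild : 2*k + 2 ≤ q := by
    have h1 : (2*(k:ℝ) + 2 : ℝ) ≤ (q:ℝ) := by nlinarith [Real.sqrt_nonneg (q:ℝ)]
    exact_mod_cast h1
  have h2k : (2:ℝ)^k ≤ (q:ℝ) ^ ((1:ℝ)/2 - δ) := by
    rcases le_or_gt ((1/2 - ε) * L) 0 with hx | hx
    · rw [hk, Nat.floor_of_nonpos hx, pow_zero]
      have := Real.rpow_le_rpow_of_exponent_le hq1 (by linarith : (0:ℝ) ≤ (1:ℝ)/2 - δ)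
      rwa [Real.rpow_zero] at this
    · have hkx' : (k:ℝ) ≤ (1/2 - ε)*L := Nat.floor_le hx.le
      calc (2:ℝ)^k = (2:ℝ) ^ ((k:ℕ):ℝ) := (Real.rpow_natCast 2 k).symm
        _ ≤ (2:ℝ) ^ ((1/2 - ε)*L) := Real.rpow_le_rpow_of_exponent_le one_le_two hkx'
        _ = ((2:ℝ) ^ L) ^ ((1:ℝ)/2 - ε) := by
            rw [mul_comm, Real.rpow_mul (by norm_num : (0:ℝ) ≤ 2)]
        _ = (q:ℝ) ^ ((1:ℝ)/2 - ε) := by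
            rw [Real.rpow_logb (by norm_num) (by norm_num) hq0]
        _ ≤ (q:ℝ) ^ ((1:ℝ)/2 - δ) :=
            Real.rpow_le_rpow_of_exponent_le hq1 (by linarith)
  have h2kpos : (0:ℝ) < 2^k := by positivity
  have hqk : 6 * Real.sqrt q ≤ (q:ℝ) / 2^k := by
    have hrpos : (0:ℝ) < (q:ℝ) ^ ((1:ℝ)/2 - δ) := Real.rpow_pos_of_pos hq0 _
    have hfrac : (q:ℝ)/(q:ℝ)^((1:ℝ)/2 - δ) ≤ (q:ℝ)/2^k :=
      div_le_div_of_nonneg_left hq0.le h2kpos h2k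
    have heq : (q:ℝ)/(q:ℝ)^((1:ℝ)/2 - δ) = (q:ℝ)^((1:ℝ)/2 + δ) := by
      rw [div_eq_iff hrpos.ne', ← Real.rpow_add hq0,
        show (1:ℝ)/2 + δ + ((1:ℝ)/2 - δ) = 1 by ring, Real.rpow_one]
    have hsplit : (q:ℝ)^((1:ℝ)/2 + δ) = Real.sqrt q * (q:ℝ)^δ := by
      rw [Real.rpow_add hq0, Real.sqrt_eq_rpow]
    have h6 : (6:ℝ) ≤ (q:ℝ)^δ := by
      have h61 : ((6:ℝ) ^ ((1:ℝ)/δ)) ^ δ = 6 := by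
        rw [← Real.rpow_mul (by norm_num : (0:ℝ) ≤ 6), one_div_mul_cancel hδ.ne',
          Real.rpow_one]
      calc (6:ℝ) = ((6:ℝ) ^ ((1:ℝ)/δ)) ^ δ := h61.symm
        _ ≤ (q:ℝ)^δ := Real.rpow_le_rpow (by positivity) hqN hδ.le
    have h7 : 6 * Real.sqrt q ≤ Real.sqrt q * (q:ℝ)^δ := by
      nlinarith [Real.sqrt_nonneg (q:ℝ)]
    rw [heq, hsplit] at hfrac
    linarith
  obtain ⟨Y, hYcard, hYInv⟩ := build_lemma hF2 k hbuild
  have hshatter : ModShatters (Squares F) Y := by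
    apply shatter_of_inv Y hYInv
    rw [hYcard]
    have : Real.sqrt (2 * (Fintype.card F : ℝ)) = Real.sqrt (2 * (q:ℝ)) := by rw [← hqdef]
    linarith [hqk, hsqrt2q, hkq, hsq64]
  refine ⟨⟨Y, hYcard, hshatter⟩, ?_⟩
  have hmem : k ∈ {n : ℕ | ∃ Y : Finset F, Y.card = n ∧ ModShatters (Squares F) Y} :=
    ⟨Y, hYcard, hshatter⟩
  have hbdd : BddAbove {n : ℕ | ∃ Y : Finset F, Y.card = n ∧ ModShatters (Squares F) Y} := by
    refine ⟨Fintype.card F, ?_⟩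
    rintro n ⟨Z, hZ, -⟩
    rw [← hZ]
    exact Finset.card_le_univ Z
  have hk_le : k ≤ vcDim F (Squares F) := le_csSup hbdd hmem
  have hfl : (1/2 - ε) * L - 1 ≤ (k:ℝ) := by
    have h1 := Nat.lt_floor_add_one ((1/2 - ε) * L)
    rw [← hk] at h1
    push_cast at h1
    linarith
  calc (1/2 - ε)*L - 1 ≤ (k:ℝ) := hfl
    _ ≤ (vcDim F (Squares F) : ℝ) := by exact_mod_cast hk_le
end

section
/- Let q be an odd prime power, let a ∈ F_q with a ≠ 0, and let b ∈ F_q. Then a finite set Y ⊆ F_q is shattered by S_q in the modified sense if and only if the set a·Y + b = {a·y + b : y ∈ Y} is shattered by S_q in the modified sense. -/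
open Classical in
lemma mem_sq_iff {F : Type} [Field F] {z : F} :
    z ∈ {z : F | ∃ w : F, w ≠ 0 ∧ z = w ^ 2} ↔ z ≠ 0 ∧ IsSquare z := by
  constructor
  · rintro ⟨w, hw, rfl⟩
    exact ⟨pow_ne_zero _ hw, ⟨w, (sq w).symm ▸ (sq w)⟩⟩
  · rintro ⟨hz, w, rfl⟩
    exact ⟨w, fun h => hz (by simp [h]), (sq w).symm⟩

lemma mul_mem_sq_iff {F : Type} [Field F] [Fintype F] [DecidableEq F]
    {a s : F} (ha : a ≠ 0) (hs : s ≠ 0) :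
    a * s ∈ {z : F | ∃ w : F, w ≠ 0 ∧ z = w ^ 2} ↔
      (IsSquare a ↔ s ∈ {z : F | ∃ w : F, w ≠ 0 ∧ z = w ^ 2}) := by
  rw [mem_sq_iff, mem_sq_iff]
  have has : a * s ≠ 0 := mul_ne_zero ha hs
  rw [← quadraticChar_one_iff_isSquare has, ← quadraticChar_one_iff_isSquare ha,
    ← quadraticChar_one_iff_isSquare hs, map_mul]
  rcases quadraticChar_dichotomy (F := F) ha with h1 | h1 <;>
    rcases quadraticChar_dichotomy (F := F) hs with h2 | h2 <;>
      simp [h1, h2, ha, hs]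

lemma modShatters_image {F : Type} [Field F] [Fintype F] [DecidableEq F]
    (a b : F) (ha : a ≠ 0) (Y : Finset F)
    (h : ModShatters {z : F | ∃ w : F, w ≠ 0 ∧ z = w ^ 2} Y) :
    ModShatters {z : F | ∃ w : F, w ≠ 0 ∧ z = w ^ 2}
      (Y.image (fun y => a * y + b)) := by
  classical
  intro A hA
  set S : Set F := {z : F | ∃ w : F, w ≠ 0 ∧ z = w ^ 2}
  obtain ⟨x, hx, hxs⟩ := h (Y.filter (fun y => IsSquare a ↔ a * y + b ∈ A))
    (Finset.filter_subset _ _)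
  refine ⟨a * x + b, ?_, ?_⟩
  · intro hmem
    obtain ⟨y, hy, hyx⟩ := Finset.mem_image.mp hmem
    have : y = x := by
      exact mul_left_cancel₀ ha (add_right_cancel hyx)
    exact hx (this ▸ hy)
  · intro y' hy'
    obtain ⟨y, hy, rfl⟩ := Finset.mem_image.mp hy'
    have hyx : y - x ≠ 0 := sub_ne_zero.mpr (fun h => hx (h ▸ hy))
    have key := mul_mem_sq_iff (F := F) ha hyx
    have hfil := hxs y hy
    simp only [Finset.mem_filter, hy, true_and] at hfil
    have heq : a * y + b - (a * x + b) = a * (y - x) := by ring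
    rw [heq, key, ← hfil]
    tauto

/-- Being shattered by the nonzero squares is translation-dilation invariant: for an
odd-order finite field `F`, `a ≠ 0` and `b ∈ F`, a finite set `Y` is shattered by the
squares in the modified sense iff `a·Y + b` is. -/
theorem shattered_iff_affine_image_shattered (F : Type) [Field F] [Fintype F]
    [DecidableEq F] (hodd : Odd (Fintype.card F)) (a b : F) (ha : a ≠ 0)
    (Y : Finset F) :
    ModShatters {z : F | ∃ w : F, w ≠ 0 ∧ z = w ^ 2} Y ↔
      ModShatters {z : F | ∃ w : F, w ≠ 0 ∧ z = w ^ 2}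
        (Y.image (fun y => a * y + b)) := by
  constructor
  · exact modShatters_image a b ha Y
  · intro h
    have h2 := modShatters_image a⁻¹ (-(a⁻¹ * b)) (inv_ne_zero ha) _ h
    rw [Finset.image_image] at h2
    have : ((fun y => a⁻¹ * y + -(a⁻¹ * b)) ∘ fun y => a * y + b) = id := by
      funext y
      simp only [Function.comp_apply, id_eq]
      field_simp
      ring
    rwa [this, Finset.image_id] at h2
end
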